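/- For a normalized operator O (Frobenius norm 1) with computational matrix entries o_{ij}, singular values {γ_l}, and Fourier-TE coefficients {λ_k} (Walsh–Hadamard coefficients of Σ as λ-decomposition), for every α ≥ 0 the CBC-Rényi entropy satisfies H_α({|o_{ij}|^2}) ≥ n - 2 log(Σ_k λ_k) = n - H_{1/2}({λ_k^2}). -/

import Mathlib

open scoped ENNReal BigOperators
open Matrix

/-- The α-order Rényi entropy (log base 2). -/
noncomputable def renyiEntropy {ι : Type*} [Fintype ι] (α : ℝ≥0∞) (p : ι → ℝ) : ℝ :=
  if α = 0 then Real.logb 2 (Nat.card {i : ι | p i ≠ 0})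
  else if α = 1 then -∑ i, p i * Real.logb 2 (p i)
  else if α = ⊤ then -(Real.logb 2 (⨆ i, p i))
  else (1 - α.toReal)⁻¹ * Real.logb 2 (∑ i, p i ^ α.toReal)

/-- Uniform entrywise bound gives a lower bound on every Rényi entropy. -/
lemma renyi_ge {ι : Type*} [Fintype ι] (p : ι → ℝ) (B : ℝ) (hB : 0 < B)
    (hp : ∀ i, 0 ≤ p i) (hpB : ∀ i, p i ≤ B) (hsum : ∑ i, p i = 1) (α : ℝ≥0∞) :
    renyiEntropy α p ≥ -Real.logb 2 B := by
  obtain ⟨i₀, -, hi₀⟩ : ∃ i ∈ Finset.univ, p i ≠ 0 := by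
    apply Finset.exists_ne_zero_of_sum_ne_zero; rw [hsum]; norm_num
  have hi₀' : 0 < p i₀ := lt_of_le_of_ne (hp i₀) (Ne.symm hi₀)
  have hne : Nonempty ι := ⟨i₀⟩
  have h2 : (1:ℝ) < 2 := one_lt_two
  unfold renyiEntropy
  split_ifs with h0 h1 htop
  · -- α = 0
    set k := Nat.card {i : ι | p i ≠ 0} with hk
    have hkcard : 1 ≤ (k : ℝ) * B := by
      calc (1:ℝ) = ∑ i ∈ Finset.univ.filter (fun i => p i ≠ 0), p i := by
            rw [← hsum]; exact (Finset.sum_filter_ne_zero _).symm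
        _ ≤ ∑ _i ∈ Finset.univ.filter (fun i => p i ≠ 0), B :=
            Finset.sum_le_sum fun i _ => hpB i
        _ = (Finset.univ.filter (fun i => p i ≠ 0)).card * B := by
            rw [Finset.sum_const, nsmul_eq_mul]
        _ = (k : ℝ) * B := by
            congr 2
            rw [hk, Nat.card_eq_fintype_card, Fintype.card_subtype]
            simp [Set.mem_setOf_eq]
    have hkB : B⁻¹ ≤ (k : ℝ) := by
      rw [inv_le_iff_one_le_mul₀' hB]
      linarith [mul_comm (k:ℝ) B]
    have := Real.logb_le_logb_of_le h2 (inv_pos.mpr hB) hkB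
    rw [Real.logb_inv] at this
    linarith
  · -- α = 1
    have : ∑ i, p i * Real.logb 2 (p i) ≤ Real.logb 2 B := by
      calc ∑ i, p i * Real.logb 2 (p i) ≤ ∑ i, p i * Real.logb 2 B := by
            apply Finset.sum_le_sum
            intro i _
            rcases eq_or_lt_of_le (hp i) with h | h
            · simp [← h]
            · exact mul_le_mul_of_nonneg_left
                (Real.logb_le_logb_of_le h2 h (hpB i)) (hp i)
        _ = Real.logb 2 B := by rw [← Finset.sum_mul, hsum, one_mul]
    linarith
  · -- α = ⊤
    have hbdd : BddAbove (Set.range p) := Set.Finite.bddAbove (Set.finite_range p)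
    have hsup_le : (⨆ i, p i) ≤ B := ciSup_le fun i => hpB i
    have hsup_pos : 0 < ⨆ i, p i := lt_of_lt_of_le hi₀' (le_ciSup hbdd i₀)
    have := Real.logb_le_logb_of_le h2 hsup_pos hsup_le
    linarith
  · -- general α
    set a := α.toReal with ha
    have ha0 : 0 < a := ENNReal.toReal_pos h0 htop
    have ha1 : a ≠ 1 := by
      intro h; exact h1 (by rw [← ENNReal.ofReal_toReal htop, ← ha, h]; simp)
    have hspos : 0 < ∑ i, p i ^ a := by
      apply Finset.sum_pos' (fun i _ => Real.rpow_nonneg (hp i) a)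
      exact ⟨i₀, Finset.mem_univ i₀, Real.rpow_pos_of_pos hi₀' a⟩
    have hBpow : 0 < B ^ (a - 1) := Real.rpow_pos_of_pos hB _
    have hlogBpow : Real.logb 2 (B ^ (a-1)) = (a-1) * Real.logb 2 B :=
      Real.logb_rpow_eq_mul_logb_of_pos hB
    rcases lt_or_gt_of_ne ha1 with hlt | hgt
    · -- a < 1
      have hterm : ∀ i, B ^ (a - 1) * p i ≤ p i ^ a := by
        intro i
        rcases eq_or_lt_of_le (hp i) with h | h
        · rw [← h, mul_zero, Real.zero_rpow (ne_of_gt ha0)]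
        · have hq : B ^ (a-1) ≤ p i ^ (a-1) :=
            Real.rpow_le_rpow_of_nonpos h (hpB i) (by linarith)
          calc B ^ (a-1) * p i ≤ p i ^ (a-1) * p i :=
                mul_le_mul_of_nonneg_right hq (hp i)
            _ = p i ^ a := by
                rw [show a = (a-1)+1 by ring, Real.rpow_add h, Real.rpow_one]; ring_nf
      have hsum_ge : B ^ (a-1) ≤ ∑ i, p i ^ a := by
        calc B ^ (a-1) = ∑ i, B ^ (a-1) * p i := by
              rw [← Finset.mul_sum, hsum, mul_one]
          _ ≤ ∑ i, p i ^ a := Finset.sum_le_sum fun i _ => hterm i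
      have hlog := Real.logb_le_logb_of_le h2 hBpow hsum_ge
      rw [hlogBpow] at hlog
      have hpos : 0 < (1 - a)⁻¹ := inv_pos.mpr (by linarith)
      have := mul_le_mul_of_nonneg_left hlog (le_of_lt hpos)
      have hc : (1-a)⁻¹ * (a-1) = -1 := by
        rw [show a-1 = -(1-a) by ring, mul_neg, inv_mul_cancel₀ (by intro hc; apply ha1; linarith)]
      have heq : (1-a)⁻¹ * ((a-1) * Real.logb 2 B) = -Real.logb 2 B := by
        rw [← mul_assoc, hc]; ring
      linarith [heq ▸ this]
    · -- a > 1
      have hterm : ∀ i, p i ^ a ≤ B ^ (a - 1) * p i := by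
        intro i
        rcases eq_or_lt_of_le (hp i) with h | h
        · rw [← h, mul_zero, Real.zero_rpow (ne_of_gt ha0)]
        · have hq : p i ^ (a-1) ≤ B ^ (a-1) :=
            Real.rpow_le_rpow (hp i) (hpB i) (by linarith)
          calc p i ^ a = p i ^ (a-1) * p i := by
                rw [show a = (a-1)+1 by ring, Real.rpow_add h, Real.rpow_one]; ring_nf
            _ ≤ B ^ (a-1) * p i := mul_le_mul_of_nonneg_right hq (hp i)
      have hsum_le : ∑ i, p i ^ a ≤ B ^ (a-1) := by
        calc ∑ i, p i ^ a ≤ ∑ i, B ^ (a-1) * p i := Finset.sum_le_sum fun i _ => hterm i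
          _ = B ^ (a-1) := by rw [← Finset.mul_sum, hsum, mul_one]
      have hlog := Real.logb_le_logb_of_le h2 hspos hsum_le
      rw [hlogBpow] at hlog
      have hneg : (1 - a)⁻¹ < 0 := by
        exact inv_lt_zero.mpr (by linarith)
      have := mul_le_mul_of_nonpos_left hlog (le_of_lt hneg)
      have hc : (1-a)⁻¹ * (a-1) = -1 := by
        rw [show a-1 = -(1-a) by ring, mul_neg, inv_mul_cancel₀ (by intro hc; apply ha1; linarith)]
      have heq : (1-a)⁻¹ * ((a-1) * Real.logb 2 B) = -Real.logb 2 B := by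
        rw [← mul_assoc, hc]; ring
      linarith [heq ▸ this]

lemma unitary_col_sq {m : Type*} [Fintype m] [DecidableEq m]
    (C : Matrix m m ℂ) (hC : C ∈ Matrix.unitaryGroup m ℂ) (j : m) :
    ∑ l, ‖C l j‖ ^ 2 = 1 := by
  have h2 := congrFun (congrFun hC.1 j) j
  simp only [Matrix.mul_apply, Matrix.one_apply_eq] at h2
  have : ∑ l, ((‖C l j‖^2 : ℝ) : ℂ) = 1 := by
    rw [← h2]
    apply Finset.sum_congr rfl
    intro l _
    rw [Matrix.star_apply, Complex.star_def, mul_comm, Complex.mul_conj,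
      Complex.normSq_eq_norm_sq]
  exact_mod_cast this

lemma unitary_row_sq {m : Type*} [Fintype m] [DecidableEq m]
    (R : Matrix m m ℂ) (hR : R ∈ Matrix.unitaryGroup m ℂ) (i : m) :
    ∑ l, ‖R i l‖ ^ 2 = 1 := by
  have h2 := congrFun (congrFun hR.2 i) i
  simp only [Matrix.mul_apply, Matrix.one_apply_eq] at h2
  have : ∑ l, ((‖R i l‖^2 : ℝ) : ℂ) = 1 := by
    rw [← h2]
    apply Finset.sum_congr rfl
    intro l _
    rw [Matrix.star_apply, Complex.star_def, Complex.mul_conj,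
      Complex.normSq_eq_norm_sq]
  exact_mod_cast this

/-- CBC lower bound from Fourier-TE: for a Frobenius-norm-1 operator `O = R Σ C`
(SVD with `Σ = diag(γ) = 2^{-n/2} ∑ λ_s Q_s`, `Q_s = ε_s Z^s` signed diagonal Paulis,
`λ ≥ 0`, `∑ λ² = 1`), for every `α ≥ 0` the CBC-Rényi entropy of the matrix-entry
distribution satisfies
`H_α({|o_{ij}|²}) ≥ n - 2 log₂(∑ λ_s) = n - H_{1/2}({λ_s²})`. -/
theorem cbc_lower_bound (n : ℕ)
    (O R C : Matrix (Fin n → Fin 2) (Fin n → Fin 2) ℂ)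
    (hR : R ∈ Matrix.unitaryGroup (Fin n → Fin 2) ℂ)
    (hC : C ∈ Matrix.unitaryGroup (Fin n → Fin 2) ℂ)
    (γ lam ε : (Fin n → Fin 2) → ℝ)
    (hO : O = R * Matrix.diagonal (fun l => (γ l : ℂ)) * C)
    (hFro : ∑ i, ∑ j, ‖O i j‖ ^ 2 = 1)
    (hγ : ∀ l, 0 ≤ γ l) (hγs : ∑ l, γ l ^ 2 = 1)
    (hlam : ∀ s, 0 ≤ lam s) (hlams : ∑ s, lam s ^ 2 = 1)
    (hε : ∀ s, ε s = 1 ∨ ε s = -1)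
    (hWH : ∀ l, γ l =
      (2 : ℝ) ^ (-(n : ℝ) / 2) *
        ∑ s, ε s * lam s * (-1 : ℝ) ^ (∑ t, (s t).val * (l t).val)) :
    (∀ α : ℝ≥0∞,
      renyiEntropy α (fun x : (Fin n → Fin 2) × (Fin n → Fin 2) => ‖O x.1 x.2‖ ^ 2)
        ≥ n - 2 * Real.logb 2 (∑ s, lam s)) ∧
    renyiEntropy (1 / 2) (fun s => lam s ^ 2) = 2 * Real.logb 2 (∑ s, lam s) := by
  set S := ∑ s, lam s with hSdef
  have hS : 0 < S := by
    obtain ⟨s₀, -, hs₀⟩ : ∃ s ∈ Finset.univ, lam s ^ 2 ≠ 0 := by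
      apply Finset.exists_ne_zero_of_sum_ne_zero; rw [hlams]; norm_num
    have : 0 < lam s₀ := lt_of_le_of_ne (hlam s₀) (by
      intro h; exact hs₀ (by rw [← h]; ring))
    exact Finset.sum_pos' (fun s _ => hlam s) ⟨s₀, Finset.mem_univ s₀, this⟩
  set c := (2:ℝ) ^ (-(n:ℝ)/2) with hcdef
  have hc : 0 < c := Real.rpow_pos_of_pos two_pos _
  -- γ l ≤ c * S
  have hγM : ∀ l, γ l ≤ c * S := by
    intro l
    rw [hWH l]
    apply mul_le_mul_of_nonneg_left _ hc.le
    apply Finset.sum_le_sum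
    intro s _
    have habs : |ε s * lam s * (-1:ℝ) ^ (∑ t, (s t).val * (l t).val)| = lam s := by
      rw [abs_mul, abs_mul, abs_pow, abs_neg, abs_one, one_pow, mul_one,
        abs_of_nonneg (hlam s)]
      rcases hε s with h | h <;> rw [h] <;> norm_num
    calc ε s * lam s * (-1:ℝ) ^ (∑ t, (s t).val * (l t).val)
        ≤ |ε s * lam s * (-1:ℝ) ^ (∑ t, (s t).val * (l t).val)| := le_abs_self _
      _ = lam s := habs
  -- entrywise bound
  have hEntry : ∀ i j, ‖O i j‖ ≤ c * S := by
    intro i j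
    have hOij : O i j = ∑ l, (R i l * (γ l : ℂ)) * C l j := by
      rw [hO, Matrix.mul_apply]
      apply Finset.sum_congr rfl
      intro l _
      rw [Matrix.mul_diagonal]
    rw [hOij]
    have hCS : ∑ l, ‖R i l‖ * ‖C l j‖ ≤ 1 := by
      have := Finset.sum_mul_sq_le_sq_mul_sq Finset.univ
        (fun l => ‖R i l‖) (fun l => ‖C l j‖)
      rw [unitary_row_sq R hR i, unitary_col_sq C hC j, one_mul] at this
      nlinarith [Finset.sum_nonneg (fun l (_ : l ∈ Finset.univ) =>
        mul_nonneg (norm_nonneg (R i l)) (norm_nonneg (C l j)))]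
    calc ‖∑ l, (R i l * (γ l : ℂ)) * C l j‖
        ≤ ∑ l, ‖(R i l * (γ l : ℂ)) * C l j‖ := norm_sum_le _ _
      _ = ∑ l, ‖R i l‖ * γ l * ‖C l j‖ := by
          apply Finset.sum_congr rfl
          intro l _
          rw [norm_mul, norm_mul, Complex.norm_real, Real.norm_eq_abs,
            abs_of_nonneg (hγ l)]
      _ ≤ ∑ l, (c * S) * (‖R i l‖ * ‖C l j‖) := by
          apply Finset.sum_le_sum
          intro l _
          have h1 : γ l * (‖R i l‖ * ‖C l j‖) ≤ (c*S) * (‖R i l‖ * ‖C l j‖) :=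
            mul_le_mul_of_nonneg_right (hγM l)
              (mul_nonneg (norm_nonneg _) (norm_nonneg _))
          linarith [h1, show ‖R i l‖ * γ l * ‖C l j‖ = γ l * (‖R i l‖ * ‖C l j‖) by ring]
      _ = (c * S) * ∑ l, ‖R i l‖ * ‖C l j‖ := (Finset.mul_sum _ _ _).symm
      _ ≤ (c * S) * 1 := mul_le_mul_of_nonneg_left hCS (by positivity)
      _ = c * S := mul_one _
  set B := (c * S) ^ 2 with hBdef
  have hB : 0 < B := by positivity
  have hpB : ∀ x : (Fin n → Fin 2) × (Fin n → Fin 2), ‖O x.1 x.2‖ ^ 2 ≤ B :=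
    fun x => pow_le_pow_left₀ (norm_nonneg _) (hEntry x.1 x.2) 2
  have hsum : ∑ x : (Fin n → Fin 2) × (Fin n → Fin 2), ‖O x.1 x.2‖ ^ 2 = 1 := by
    rw [Fintype.sum_prod_type]; exact hFro
  have hlogB : -Real.logb 2 B = n - 2 * Real.logb 2 S := by
    rw [hBdef, Real.logb_pow, Real.logb_mul (ne_of_gt hc) (ne_of_gt hS), hcdef,
      Real.logb_rpow two_pos]
    · ring
    · norm_num
  constructor
  · intro α
    have := renyi_ge (fun x : (Fin n → Fin 2) × (Fin n → Fin 2) => ‖O x.1 x.2‖ ^ 2)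
      B hB (fun x => by positivity) hpB hsum α
    rw [hlogB] at this
    exact this
  · -- H_{1/2}
    have h0 : (1/2 : ℝ≥0∞) ≠ 0 := by norm_num
    have h1 : (1/2 : ℝ≥0∞) ≠ 1 := by norm_num
    have ht : (1/2 : ℝ≥0∞) ≠ ⊤ := by norm_num
    have htr : (1/2 : ℝ≥0∞).toReal = 1/2 := by norm_num
    unfold renyiEntropy
    rw [if_neg h0, if_neg h1, if_neg ht, htr]
    have hsum2 : ∑ s, (lam s ^ 2 : ℝ) ^ ((1:ℝ)/2) = S := by
      apply Finset.sum_congr rfl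
      intro s _
      rw [← Real.rpow_natCast (lam s) 2, ← Real.rpow_mul (hlam s)]
      norm_num
    rw [hsum2]
    norm_num
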